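/- Let G be a finite D-quasirandom group and S a symmetric subset of G not containing the identity. Then the chromatic number of the Cayley graph Cay(G,S) satisfies χ(Cay(G,S)) ≥ √(D·|S|/|G|). -/

import Mathlib

/-- The Cayley graph of a group `G` with respect to a set `S`: vertices `x, y`
are adjacent iff `x ≠ y` and `x⁻¹ * y ∈ S` (symmetrized). When `S` is symmetric
and does not contain the identity, this is exactly `x ~ y ↔ x⁻¹ * y ∈ S`. -/
def cayleyGraph {G : Type*} [Group G] (S : Set G) : SimpleGraph G :=
  SimpleGraph.fromRel (fun x y => x⁻¹ * y ∈ S)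

set_option linter.unusedSectionVars false
set_option linter.unusedVariables false

noncomputable section QRAux

open Finset

variable {G : Type*} [Group G] [Fintype G] [DecidableEq G]

def qrInd (S : Set G) [DecidablePred (· ∈ S)] (x : G) : ℂ := if x ∈ S then 1 else 0

def qrT (S : Set G) [DecidablePred (· ∈ S)] :
    EuclideanSpace ℂ G →ₗ[ℂ] EuclideanSpace ℂ G where
  toFun f := WithLp.toLp 2 (fun x => ∑ y, qrInd S (x⁻¹ * y) * f y)
  map_add' f g := by
    ext x
    simp [Finset.sum_add_distrib, mul_add]
  map_smul' c f := by
    ext x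
    simp [Finset.mul_sum]
    ring_nf
    simp [mul_comm, mul_assoc, mul_left_comm]

lemma qrT_apply (S : Set G) [DecidablePred (· ∈ S)] (f : EuclideanSpace ℂ G) (x : G) :
    qrT S f x = ∑ y, qrInd S (x⁻¹ * y) * f y := rfl

def qrL (g : G) : EuclideanSpace ℂ G →ₗ[ℂ] EuclideanSpace ℂ G where
  toFun f := WithLp.toLp 2 (fun x => f (g⁻¹ * x))
  map_add' f h := rfl
  map_smul' c f := rfl

lemma qrL_apply (g : G) (f : EuclideanSpace ℂ G) (x : G) : qrL g f x = f (g⁻¹ * x) := rfl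

def qrSum : EuclideanSpace ℂ G →ₗ[ℂ] ℂ where
  toFun f := ∑ x, f x
  map_add' f g := by simp [Finset.sum_add_distrib]
  map_smul' c f := by simp [Finset.mul_sum]

lemma qrSum_apply (f : EuclideanSpace ℂ G) : qrSum f = ∑ x, f x := rfl

variable (S : Set G) [DecidablePred (· ∈ S)]

lemma qrInd_conj (x : G) : (starRingEnd ℂ) (qrInd S x) = qrInd S x := by
  unfold qrInd; split <;> simp

lemma qrInd_symm (hS : ∀ s ∈ S, s⁻¹ ∈ S) (x : G) : qrInd S x⁻¹ = qrInd S x := by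
  unfold qrInd
  by_cases h : x ∈ S
  · simp [h, hS x h]
  · have h' : x⁻¹ ∉ S := fun hc => h (by simpa using hS _ hc)
    simp [h, h']

lemma qrInd_total : ∑ z, qrInd S z = (S.ncard : ℂ) := by
  unfold qrInd
  rw [Finset.sum_boole]
  congr 1
  rw [Set.ncard_eq_toFinset_card']
  congr 1
  ext z
  simp

lemma qrInd_row_sum (x : G) : ∑ y, qrInd S (x⁻¹ * y) = (S.ncard : ℂ) := by
  rw [Fintype.sum_equiv (Equiv.mulLeft x⁻¹) (fun y => qrInd S (x⁻¹ * y)) (fun z => qrInd S z)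
    (fun y => rfl)]
  exact qrInd_total S

lemma qrInd_col_sum (y : G) : ∑ x, qrInd S (x⁻¹ * y) = (S.ncard : ℂ) := by
  rw [Fintype.sum_equiv ((Equiv.inv G).trans (Equiv.mulRight y))
    (fun x => qrInd S (x⁻¹ * y)) (fun z => qrInd S z) (fun x => rfl)]
  exact qrInd_total S

lemma qrT_isSymmetric (hS : ∀ s ∈ S, s⁻¹ ∈ S) : (qrT S).IsSymmetric := by
  intro f g
  simp only [PiLp.inner_apply, qrT_apply, RCLike.inner_apply]
  simp only [map_sum, map_mul, qrInd_conj, Finset.sum_mul, Finset.mul_sum]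
  rw [Finset.sum_comm]
  apply Finset.sum_congr rfl
  intro y _
  apply Finset.sum_congr rfl
  intro x _
  have : qrInd S (y⁻¹ * x) = qrInd S (x⁻¹ * y) := by
    rw [← qrInd_symm S hS (y⁻¹ * x)]; simp
  rw [this]; ring

lemma qrT_comm_qrL (g : G) : (qrT S) ∘ₗ (qrL g) = (qrL g) ∘ₗ (qrT S) := by
  apply LinearMap.ext; intro f
  ext x
  simp only [LinearMap.comp_apply, qrT_apply, qrL_apply]
  rw [← Fintype.sum_equiv (Equiv.mulLeft g) (fun y => qrInd S ((g⁻¹*x)⁻¹ * y) * f y)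
      (fun y => qrInd S (x⁻¹ * y) * f (g⁻¹ * y))]
  intro y
  have h1 : g⁻¹ * (g * y) = y := by group
  have h2 : x⁻¹ * (g * y) = (g⁻¹ * x)⁻¹ * y := by group
  rw [Equiv.coe_mulLeft, h1, h2]


/-- every nonzero invariant submodule contains a minimal one -/
lemma qr_exists_minimal {V : Type*} [AddCommGroup V] [Module ℂ V] [FiniteDimensional ℂ V]
    (ρ : G → V →ₗ[ℂ] V) :
    ∀ (U : Submodule ℂ V), U ≠ ⊥ → (∀ g, U.map (ρ g) ≤ U) →
      ∃ U' : Submodule ℂ V, U' ≤ U ∧ U' ≠ ⊥ ∧ (∀ g, U'.map (ρ g) ≤ U') ∧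
        ∀ U'' ≤ U', (∀ g, U''.map (ρ g) ≤ U'') → U'' = ⊥ ∨ U'' = U' := by
  suffices H : ∀ n (U : Submodule ℂ V), Module.finrank ℂ U ≤ n → U ≠ ⊥ →
      (∀ g, U.map (ρ g) ≤ U) →
      ∃ U' : Submodule ℂ V, U' ≤ U ∧ U' ≠ ⊥ ∧ (∀ g, U'.map (ρ g) ≤ U') ∧
        ∀ U'' ≤ U', (∀ g, U''.map (ρ g) ≤ U'') → U'' = ⊥ ∨ U'' = U' by
    exact fun U => H (Module.finrank ℂ U) U le_rfl
  intro n
  induction n with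
  | zero =>
    intro U hfr hne _
    exact absurd (Submodule.finrank_eq_zero.mp (Nat.le_zero.mp hfr)) hne
  | succ n ih =>
    intro U hfr hne hinv
    by_cases hmin : ∀ U'' ≤ U, (∀ g, U''.map (ρ g) ≤ U'') → U'' = ⊥ ∨ U'' = U
    · exact ⟨U, le_refl U, hne, hinv, hmin⟩
    · push_neg at hmin
      obtain ⟨U'', hle, hinv'', hbot, htop⟩ := hmin
      have hlt : U'' < U := lt_of_le_of_ne hle htop
      have hfrlt : Module.finrank ℂ U'' ≤ n := by
        have := Submodule.finrank_lt_finrank_of_lt hlt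
        omega
      obtain ⟨U', h1, h2, h3, h4⟩ := ih U'' hfrlt hbot hinv''
      exact ⟨U', h1.trans hle, h2, h3, h4⟩


lemma qrL_one : qrL (1 : G) = LinearMap.id := by
  apply LinearMap.ext; intro f; ext x
  show f (1⁻¹ * x) = f x
  rw [inv_one, one_mul]

lemma qrL_mul (g h : G) : qrL (g * h) = (qrL g) ∘ₗ (qrL h) := by
  apply LinearMap.ext; intro f; ext x
  show f ((g * h)⁻¹ * x) = f (h⁻¹ * (g⁻¹ * x))
  rw [mul_inv_rev, mul_assoc]

lemma qr_D_le_finrank (D : ℕ)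
    (hquasi : ∀ (V : Type) [AddCommGroup V] [Module ℂ V] [FiniteDimensional ℂ V]
      (ρ : Representation ℂ G V),
      (∃ g : G, ρ g ≠ LinearMap.id) →
      (∀ W : Submodule ℂ V, (∀ g : G, W.map (ρ g) ≤ W) → W = ⊥ ∨ W = ⊤) →
      D ≤ Module.finrank ℂ V)
    (U : Submodule ℂ (EuclideanSpace ℂ G)) (hne : U ≠ ⊥)
    (hinv : ∀ g, U.map (qrL g) ≤ U) (hWle : U ≤ LinearMap.ker qrSum) :
    D ≤ Module.finrank ℂ U := by
  obtain ⟨U', hle, hne', hinv', hmin⟩ := qr_exists_minimal qrL U hne hinv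
  set k := Module.finrank ℂ U' with hk
  let e : U' ≃ₗ[ℂ] (Fin k → ℂ) := (Module.finBasis ℂ U').equivFun
  have hres : ∀ g : G, ∀ x ∈ U', qrL g x ∈ U' :=
    fun g x hx => hinv' g ⟨x, hx, rfl⟩
  let r : G → (U' →ₗ[ℂ] U') := fun g => (qrL g).restrict (hres g)
  have hr_coe : ∀ (g : G) (u : U'), ((r g u : U') : EuclideanSpace ℂ G) = qrL g (u : EuclideanSpace ℂ G) :=
    fun g u => rfl
  have hr_one : r 1 = LinearMap.id := by
    apply LinearMap.ext; intro u
    apply Subtype.ext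
    rw [hr_coe, qrL_one]
    rfl
  have hr_mul : ∀ g h : G, r (g * h) = (r g) ∘ₗ (r h) := by
    intro g h
    apply LinearMap.ext; intro u
    apply Subtype.ext
    rw [LinearMap.comp_apply, hr_coe, hr_coe, hr_coe, qrL_mul, LinearMap.comp_apply]
  let ρ₂ : Representation ℂ G (Fin k → ℂ) :=
  { toFun := fun g => e.toLinearMap ∘ₗ (r g) ∘ₗ e.symm.toLinearMap
    map_one' := by
      apply LinearMap.ext; intro v
      simp [hr_one]
    map_mul' := by
      intro g h
      apply LinearMap.ext; intro v
      simp [hr_mul, Module.End.mul_apply] }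
  have hρ₂ : ∀ (g : G) (v : Fin k → ℂ), ρ₂ g v = e (r g (e.symm v)) := fun g v => rfl
  -- nontriviality
  have hnontriv : ∃ g : G, ρ₂ g ≠ LinearMap.id := by
    by_contra hcon
    push_neg at hcon
    apply hne'
    rw [Submodule.eq_bot_iff]
    intro x hx
    set u : U' := ⟨x, hx⟩ with hu
    have hfix : ∀ g : G, qrL g x = x := by
      intro g
      have h1 : ρ₂ g (e u) = e u := by rw [hcon g]; rfl
      rw [hρ₂, e.symm_apply_apply] at h1
      have h2 : r g u = u := e.injective h1
      have := hr_coe g u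
      rw [h2] at this
      exact this.symm
    have hconst : ∀ z : G, x z = x 1 := by
      intro z
      have h : x z = (qrL z x) z := by rw [hfix z]
      rw [qrL_apply z x z, inv_mul_cancel] at h
      exact h
    have hsum : qrSum x = 0 := hWle (hle hx)
    rw [qrSum_apply] at hsum
    have hsum2 : (Fintype.card G : ℂ) * x 1 = 0 := by
      have hcalc : ∑ z : G, x z = (Fintype.card G : ℂ) * x 1 := by
        rw [Finset.sum_congr rfl (fun z _ => hconst z), Finset.sum_const, Finset.card_univ,
          nsmul_eq_mul]
      exact hcalc.symm.trans hsum
    have hx1 : x 1 = 0 := by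
      have : (Fintype.card G : ℂ) ≠ 0 := by
        simp [Fintype.card_ne_zero]
      exact (mul_eq_zero.mp hsum2).resolve_left this
    ext z
    rw [hconst z, hx1]
    rfl
  -- irreducibility
  have hirr : ∀ W₂ : Submodule ℂ (Fin k → ℂ), (∀ g : G, W₂.map (ρ₂ g) ≤ W₂) → W₂ = ⊥ ∨ W₂ = ⊤ := by
    intro W₂ hinv₂
    set W₃ : Submodule ℂ (EuclideanSpace ℂ G) := (W₂.comap e.toLinearMap).map U'.subtype with hW₃
    have hW₃le : W₃ ≤ U' := Submodule.map_subtype_le _ _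
    have hW₃inv : ∀ g, W₃.map (qrL g) ≤ W₃ := by
      intro g
      rintro x ⟨z, ⟨u, hu, rfl⟩, rfl⟩
      refine ⟨r g u, ?_, (hr_coe g u).symm⟩
      have : ρ₂ g (e u) ∈ W₂ := hinv₂ g ⟨e u, hu, rfl⟩
      rw [hρ₂, e.symm_apply_apply] at this
      exact this
    rcases hmin W₃ hW₃le hW₃inv with hb | ht
    · left
      rw [Submodule.eq_bot_iff]
      intro w hw
      have hmem : (↑(e.symm w) : EuclideanSpace ℂ G) ∈ W₃ := by
        refine ⟨e.symm w, ?_, rfl⟩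
        show e (e.symm w) ∈ W₂
        rw [e.apply_symm_apply]; exact hw
      rw [hb] at hmem
      have : e.symm w = 0 := by
        apply Subtype.ext
        simpa using hmem
      have := congrArg e this
      rw [e.apply_symm_apply] at this
      simpa using this
    · right
      rw [Submodule.eq_top_iff']
      intro v
      have hmem : (↑(e.symm v) : EuclideanSpace ℂ G) ∈ W₃ := by
        rw [ht]; exact (e.symm v).2
      obtain ⟨u, hu, huv⟩ := hmem
      have : u = e.symm v := Subtype.ext huv
      rw [this] at hu
      have : e (e.symm v) ∈ W₂ := hu
      rwa [e.apply_symm_apply] at this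
  have := hquasi (Fin k → ℂ) ρ₂ hnontriv hirr
  rw [Module.finrank_fin_fun] at this
  exact this.trans (Submodule.finrank_mono hle)


lemma qrInd_sq (x : G) : qrInd S x * qrInd S x = qrInd S x := by
  unfold qrInd; split <;> simp

lemma qr_trace (hS : ∀ s ∈ S, s⁻¹ ∈ S) :
    ∑ i, (((qrT_isSymmetric S hS).eigenvalues finrank_euclideanSpace i : ℂ))^2
      = (Fintype.card G : ℂ) * (S.ncard : ℂ) := by
  set hT := qrT_isSymmetric S hS with hhT
  set b := hT.eigenvectorBasis finrank_euclideanSpace with hb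
  set μ := hT.eigenvalues finrank_euclideanSpace with hμ
  have h1 : LinearMap.trace ℂ _ ((qrT S) ∘ₗ (qrT S)) = ∑ i, ((μ i : ℂ))^2 := by
    rw [LinearMap.trace_eq_matrix_trace ℂ b.toBasis]
    rw [Matrix.trace]
    apply Finset.sum_congr rfl
    intro i _
    rw [Matrix.diag]
    rw [LinearMap.toMatrix_apply]
    rw [OrthonormalBasis.coe_toBasis]
    rw [LinearMap.comp_apply]
    rw [hT.apply_eigenvectorBasis finrank_euclideanSpace i, map_smul,
      hT.apply_eigenvectorBasis finrank_euclideanSpace i, smul_smul]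
    rw [map_smul]
    rw [← OrthonormalBasis.coe_toBasis, Module.Basis.repr_self]
    simp [sq]
    rfl
  have h2 : LinearMap.trace ℂ _ ((qrT S) ∘ₗ (qrT S))
      = (Fintype.card G : ℂ) * (S.ncard : ℂ) := by
    set bs := (EuclideanSpace.basisFun G ℂ).toBasis with hbs
    have hM : ∀ x y : G, LinearMap.toMatrix bs bs (qrT S) x y = qrInd S (x⁻¹ * y) := by
      intro x y
      rw [LinearMap.toMatrix_apply]
      have hbsy : (bs y : EuclideanSpace ℂ G) = EuclideanSpace.single y 1 := by
        rw [hbs, OrthonormalBasis.coe_toBasis, EuclideanSpace.basisFun_apply]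
      rw [hbsy]
      have hrepr : ∀ (v : EuclideanSpace ℂ G), bs.repr v x = v x := fun v => rfl
      rw [hrepr]
      rw [qrT_apply]
      rw [Finset.sum_congr rfl (fun z _ => by
        rw [EuclideanSpace.single_apply, mul_ite, mul_one, mul_zero])]
      rw [Finset.sum_ite_eq' Finset.univ y (fun z => qrInd S (x⁻¹ * z))]
      simp only [Finset.mem_univ, if_true]
    rw [LinearMap.trace_eq_matrix_trace ℂ bs]
    rw [LinearMap.toMatrix_comp bs bs bs]
    rw [Matrix.trace]
    have hdiag : ∀ x : G, (LinearMap.toMatrix bs bs (qrT S) * LinearMap.toMatrix bs bs (qrT S)).diag x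
        = (S.ncard : ℂ) := by
      intro x
      rw [Matrix.diag, Matrix.mul_apply]
      have hterm : ∀ y : G, LinearMap.toMatrix bs bs (qrT S) x y
          * LinearMap.toMatrix bs bs (qrT S) y x = qrInd S (x⁻¹ * y) := by
        intro y
        rw [hM x y, hM y x]
        have h' : qrInd S (y⁻¹ * x) = qrInd S (x⁻¹ * y) := by
          rw [← qrInd_symm S hS (y⁻¹ * x), mul_inv_rev, inv_inv]
        rw [h', qrInd_sq]
      rw [Finset.sum_congr rfl (fun y _ => hterm y)]
      exact qrInd_row_sum S x
    rw [Finset.sum_congr rfl (fun x _ => hdiag x), Finset.sum_const, Finset.card_univ,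
      nsmul_eq_mul]
  rw [← h1, h2]


def qrOne : EuclideanSpace ℂ G := WithLp.toLp 2 (fun _ : G => (1 : ℂ))

lemma qrSum_qrL (g : G) (f : EuclideanSpace ℂ G) : qrSum (qrL g f) = qrSum f := by
  rw [qrSum_apply, qrSum_apply]
  exact Fintype.sum_equiv (Equiv.mulLeft g⁻¹) _ _ (fun x => rfl)

lemma qr_ker_inv (g : G) : (LinearMap.ker (qrSum (G := G))).map (qrL g) ≤ LinearMap.ker qrSum := by
  rintro x ⟨y, hy, rfl⟩
  rw [LinearMap.mem_ker, qrSum_qrL]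
  exact hy

lemma qr_sum_qrL_eq (v : EuclideanSpace ℂ G) :
    ∑ g : G, qrL g v = (qrSum v) • (qrOne : EuclideanSpace ℂ G) := by
  ext x
  have h1 : (∑ g : G, qrL g v) x = ∑ g : G, v (g⁻¹ * x) := by
    rw [WithLp.ofLp_sum, Finset.sum_apply]
    rfl
  rw [h1]
  have h2 : ((qrSum v) • (qrOne : EuclideanSpace ℂ G)) x = qrSum v := by
    simp [qrOne]
  rw [h2, qrSum_apply]
  exact Fintype.sum_equiv ((Equiv.inv G).trans (Equiv.mulRight x)) _ _ (fun g => rfl)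

lemma qr_eig_bound (D : ℕ)
    (hquasi : ∀ (V : Type) [AddCommGroup V] [Module ℂ V] [FiniteDimensional ℂ V]
      (ρ : Representation ℂ G V),
      (∃ g : G, ρ g ≠ LinearMap.id) →
      (∀ W : Submodule ℂ V, (∀ g : G, W.map (ρ g) ≤ W) → W = ⊥ ∨ W = ⊤) →
      D ≤ Module.finrank ℂ V)
    (hS : ∀ s ∈ S, s⁻¹ ∈ S) (i : Fin (Fintype.card G))
    (hex : ∃ f : EuclideanSpace ℂ G, f ∈ LinearMap.ker qrSum ∧
      (inner ℂ ((qrT_isSymmetric S hS).eigenvectorBasis finrank_euclideanSpace i) f : ℂ) ≠ 0) :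
    (D : ℝ) * ((qrT_isSymmetric S hS).eigenvalues finrank_euclideanSpace i)^2
      ≤ (Fintype.card G : ℝ) * (S.ncard : ℝ) := by
  classical
  set hT := qrT_isSymmetric S hS with hhT
  set b := hT.eigenvectorBasis finrank_euclideanSpace with hb
  set μ := hT.eigenvalues finrank_euclideanSpace with hμ
  obtain ⟨f, hfker, hfinner⟩ := hex
  set E := Module.End.eigenspace (qrT S) ((μ i : ℂ)) with hE
  have hvE : b i ∈ E := (hT.hasEigenvector_eigenvectorBasis finrank_euclideanSpace i).1
  have hvne : b i ≠ 0 := (hT.hasEigenvector_eigenvectorBasis finrank_euclideanSpace i).2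
  -- E is invariant
  have hEinv : ∀ g, E.map (qrL g) ≤ E := by
    intro g
    rintro x ⟨y, hy, rfl⟩
    have hy' : (qrT S) y = ((μ i : ℂ)) • y := Module.End.mem_eigenspace_iff.mp hy
    rw [Module.End.mem_eigenspace_iff]
    calc (qrT S) (qrL g y) = qrL g ((qrT S) y) := by
          rw [← LinearMap.comp_apply, ← LinearMap.comp_apply, qrT_comm_qrL]
      _ = (μ i : ℂ) • qrL g y := by rw [hy', map_smul]
  -- b i is not constant
  have hnotspan : b i ∉ Submodule.span ℂ {(qrOne : EuclideanSpace ℂ G)} := by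
    intro hmem
    obtain ⟨a, ha⟩ := Submodule.mem_span_singleton.mp hmem
    apply hfinner
    rw [← ha, inner_smul_left]
    have : (inner ℂ (qrOne : EuclideanSpace ℂ G) f : ℂ) = qrSum f := by
      rw [qrSum_apply]
      simp [PiLp.inner_apply, qrOne]
    rw [this, LinearMap.mem_ker.mp hfker, mul_zero]
  -- the element f₀
  set f₀ : EuclideanSpace ℂ G :=
    (Fintype.card G : ℂ) • (b i) - ∑ g : G, qrL g (b i) with hf₀
  have hf₀E : f₀ ∈ E := by
    apply Submodule.sub_mem
    · exact Submodule.smul_mem _ _ hvE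
    · exact Submodule.sum_mem _ (fun g _ => hEinv g ⟨b i, hvE, rfl⟩)
  have hf₀ker : f₀ ∈ LinearMap.ker qrSum := by
    rw [LinearMap.mem_ker, hf₀, map_sub, map_smul, map_sum]
    rw [Finset.sum_congr rfl (fun g _ => qrSum_qrL g (b i))]
    rw [Finset.sum_const, Finset.card_univ, smul_eq_mul, nsmul_eq_mul]
    ring
  have hf₀ne : f₀ ≠ 0 := by
    intro hzero
    apply hnotspan
    rw [hf₀, sub_eq_zero, qr_sum_qrL_eq] at hzero
    rw [Submodule.mem_span_singleton]
    refine ⟨(Fintype.card G : ℂ)⁻¹ * qrSum (b i), ?_⟩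
    have hm : (Fintype.card G : ℂ) ≠ 0 := by simp [Fintype.card_ne_zero]
    rw [mul_smul]
    rw [← hzero, smul_smul, inv_mul_cancel₀ hm, one_smul]
  -- the invariant subspace
  set U := E ⊓ LinearMap.ker qrSum with hU
  have hUne : U ≠ ⊥ := by
    rw [Submodule.ne_bot_iff]
    exact ⟨f₀, ⟨hf₀E, hf₀ker⟩, hf₀ne⟩
  have hUinv : ∀ g, U.map (qrL g) ≤ U := by
    intro g
    rintro x ⟨y, ⟨hy1, hy2⟩, rfl⟩
    exact ⟨hEinv g ⟨y, hy1, rfl⟩, qr_ker_inv g ⟨y, hy2, rfl⟩⟩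
  have hDU : D ≤ Module.finrank ℂ U :=
    qr_D_le_finrank D hquasi U hUne hUinv inf_le_right
  have hUE : Module.finrank ℂ U ≤ Module.finrank ℂ E :=
    Submodule.finrank_mono inf_le_left
  -- E is contained in the span of eigenvectors with the same eigenvalue
  set F := Finset.univ.filter (fun j => μ j = μ i) with hF
  have hEspan : E ≤ Submodule.span ℂ ((F.image (fun j => b j) : Finset (EuclideanSpace ℂ G)) : Set (EuclideanSpace ℂ G)) := by
    intro w hw
    rw [Module.End.mem_eigenspace_iff] at hw
    have hcoef : ∀ j : Fin (Fintype.card G), μ j ≠ μ i → (inner ℂ (b j) w : ℂ) = 0 := by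
      intro j hj
      have h1 : (inner ℂ ((qrT S) (b j)) w : ℂ) = (inner ℂ (b j) ((qrT S) w) : ℂ) := hT (b j) w
      rw [hT.apply_eigenvectorBasis finrank_euclideanSpace j, hw,
        inner_smul_left, inner_smul_right] at h1
      have h2 : ((μ j : ℂ) - (μ i : ℂ)) * (inner ℂ (b j) w : ℂ) = 0 := by
        rw [sub_mul]
        rw [RCLike.conj_ofReal] at h1
        rw [← hμ, ← hb] at h1
        exact sub_eq_zero_of_eq h1
      rcases mul_eq_zero.mp h2 with h | h
      · exfalso; apply hj
        have : (μ j : ℂ) = (μ i : ℂ) := by linear_combination h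
        exact_mod_cast this
      · exact h
    have hrepr : w = ∑ j ∈ F, (inner ℂ (b j) w : ℂ) • b j := by
      conv_lhs => rw [← b.sum_repr' w]
      rw [← Finset.sum_filter_add_sum_filter_not Finset.univ (fun j => μ j = μ i)]
      rw [← hF]
      have : ∑ j ∈ Finset.univ.filter (fun j => ¬ μ j = μ i), (inner ℂ (b j) w : ℂ) • b j = 0 := by
        apply Finset.sum_eq_zero
        intro j hj
        rw [hcoef j (Finset.mem_filter.mp hj).2, zero_smul]
      rw [this, add_zero]
    rw [hrepr]
    apply Submodule.sum_mem
    intro j hj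
    apply Submodule.smul_mem
    apply Submodule.subset_span
    simp only [Finset.coe_image, Set.mem_image, Finset.mem_coe]
    exact ⟨j, hj, rfl⟩
  have hEF : Module.finrank ℂ E ≤ F.card := by
    calc Module.finrank ℂ E
        ≤ Module.finrank ℂ (Submodule.span ℂ ((F.image (fun j => b j) : Finset (EuclideanSpace ℂ G)) : Set (EuclideanSpace ℂ G))) :=
          Submodule.finrank_mono hEspan
      _ ≤ (F.image (fun j => b j)).card := finrank_span_finset_le_card _
      _ ≤ F.card := Finset.card_image_le
  -- trace bound
  have htrace : ∑ j, (μ j)^2 = (Fintype.card G : ℝ) * (S.ncard : ℝ) := by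
    have := qr_trace S hS
    rw [← hhT, ← hμ] at this
    have h2 : ((∑ j, (μ j)^2 : ℝ) : ℂ) = ((Fintype.card G : ℝ) * (S.ncard : ℝ) : ℂ) := by
      push_cast
      push_cast at this
      exact this
    exact_mod_cast h2
  calc (D : ℝ) * (μ i)^2 ≤ (F.card : ℝ) * (μ i)^2 := by
        apply mul_le_mul_of_nonneg_right _ (sq_nonneg _)
        exact_mod_cast (hDU.trans (hUE.trans hEF))
    _ = ∑ j ∈ F, (μ j)^2 := by
        rw [Finset.sum_congr rfl (fun j hj => by rw [(Finset.mem_filter.mp hj).2])]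
        rw [Finset.sum_const, nsmul_eq_mul]
    _ ≤ ∑ j, (μ j)^2 := Finset.sum_le_sum_of_subset_of_nonneg (Finset.filter_subset _ _)
        (fun j _ _ => sq_nonneg _)
    _ = (Fintype.card G : ℝ) * (S.ncard : ℝ) := htrace


lemma qr_quad_bound (D : ℕ) (hD : 0 < D)
    (hquasi : ∀ (V : Type) [AddCommGroup V] [Module ℂ V] [FiniteDimensional ℂ V]
      (ρ : Representation ℂ G V),
      (∃ g : G, ρ g ≠ LinearMap.id) →
      (∀ W : Submodule ℂ V, (∀ g : G, W.map (ρ g) ≤ W) → W = ⊥ ∨ W = ⊤) →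
      D ≤ Module.finrank ℂ V)
    (hS : ∀ s ∈ S, s⁻¹ ∈ S) (f : EuclideanSpace ℂ G) (hf : f ∈ LinearMap.ker qrSum) :
    |(inner ℂ f (qrT S f) : ℂ).re|
      ≤ Real.sqrt (((Fintype.card G : ℝ) * (S.ncard : ℝ))/D) * ‖f‖^2 := by
  classical
  set hT := qrT_isSymmetric S hS with hhT
  set b := hT.eigenvectorBasis finrank_euclideanSpace with hb
  set μ := hT.eigenvalues finrank_euclideanSpace with hμ
  set B := Real.sqrt (((Fintype.card G : ℝ) * (S.ncard : ℝ))/D) with hB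
  set c : Fin (Fintype.card G) → ℂ := fun j => b.repr f j with hc
  have h2 : ∀ j, b.repr (qrT S f) j = (μ j : ℂ) * c j := by
    intro j
    rw [b.repr_apply_apply]
    rw [← hT (b j) f]
    have happ : (qrT S) (b j) = ((μ j : ℂ)) • b j :=
      hT.apply_eigenvectorBasis finrank_euclideanSpace j
    rw [happ, inner_smul_left, Complex.conj_ofReal]
    congr 1
    exact (b.repr_apply_apply f j).symm
  have h1 : (inner ℂ f (qrT S f) : ℂ) = ∑ j, (starRingEnd ℂ) (c j) * ((μ j : ℂ) * c j) := by
    rw [← b.repr.inner_map_map f (qrT S f)]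
    rw [PiLp.inner_apply]
    apply Finset.sum_congr rfl
    intro j _
    rw [h2 j]
    exact RCLike.inner_apply' _ _
  have h3 : (inner ℂ f (qrT S f) : ℂ).re = ∑ j, μ j * Complex.normSq (c j) := by
    rw [h1, Complex.re_sum]
    apply Finset.sum_congr rfl
    intro j _
    have hterm : (starRingEnd ℂ) (c j) * ((μ j : ℂ) * c j)
        = ((μ j * Complex.normSq (c j) : ℝ) : ℂ) := by
      have hring : (starRingEnd ℂ) (c j) * ((μ j : ℂ) * c j)
          = (μ j : ℂ) * ((starRingEnd ℂ) (c j) * c j) := by ring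
      rw [hring, ← Complex.normSq_eq_conj_mul_self, ← Complex.ofReal_mul]
    rw [hterm, Complex.ofReal_re]
  have h4 : ‖f‖^2 = ∑ j, Complex.normSq (c j) := by
    have hn : ‖f‖ = ‖b.repr f‖ := (b.repr.norm_map f).symm
    rw [hn, EuclideanSpace.norm_eq, Real.sq_sqrt (Finset.sum_nonneg (fun j _ => sq_nonneg _))]
    apply Finset.sum_congr rfl
    intro j _
    rw [← Complex.sq_norm]
  have h5 : ∀ j, |μ j| * Complex.normSq (c j) ≤ B * Complex.normSq (c j) := by
    intro j
    by_cases hcj : c j = 0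
    · rw [hcj]; simp
    · apply mul_le_mul_of_nonneg_right _ (Complex.normSq_nonneg _)
      have hinner : (inner ℂ (b j) f : ℂ) ≠ 0 := by
        rw [← b.repr_apply_apply]; exact hcj
      have hbound := qr_eig_bound S D hquasi hS j ⟨f, hf, hinner⟩
      have hμsq : (μ j)^2 ≤ ((Fintype.card G : ℝ) * (S.ncard : ℝ))/D := by
        rw [le_div_iff₀ (by exact_mod_cast hD : (0:ℝ) < D)]
        calc (μ j)^2 * D = D * (μ j)^2 := by ring
          _ ≤ _ := hbound
      rw [hB, ← Real.sqrt_sq_eq_abs]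
      exact Real.sqrt_le_sqrt hμsq
  calc |(inner ℂ f (qrT S f) : ℂ).re| = |∑ j, μ j * Complex.normSq (c j)| := by rw [h3]
    _ ≤ ∑ j, |μ j * Complex.normSq (c j)| := Finset.abs_sum_le_sum_abs _ _
    _ = ∑ j, |μ j| * Complex.normSq (c j) := by
        apply Finset.sum_congr rfl
        intro j _
        rw [abs_mul, abs_of_nonneg (Complex.normSq_nonneg _)]
    _ ≤ ∑ j, B * Complex.normSq (c j) := Finset.sum_le_sum (fun j _ => h5 j)
    _ = B * ‖f‖^2 := by rw [← Finset.mul_sum, h4]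


lemma qrSum_qrT (h : EuclideanSpace ℂ G) : qrSum (qrT S h) = (S.ncard : ℂ) * qrSum h := by
  rw [qrSum_apply]
  have : ∀ x : G, qrT S h x = ∑ y, qrInd S (x⁻¹ * y) * h y := fun x => rfl
  rw [Finset.sum_congr rfl (fun x _ => this x), Finset.sum_comm]
  rw [qrSum_apply, Finset.mul_sum]
  apply Finset.sum_congr rfl
  intro y _
  rw [← Finset.sum_mul, qrInd_col_sum]

lemma qr_indep_bound (D : ℕ) (hD : 0 < D)
    (hquasi : ∀ (V : Type) [AddCommGroup V] [Module ℂ V] [FiniteDimensional ℂ V]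
      (ρ : Representation ℂ G V),
      (∃ g : G, ρ g ≠ LinearMap.id) →
      (∀ W : Submodule ℂ V, (∀ g : G, W.map (ρ g) ≤ W) → W = ⊥ ∨ W = ⊤) →
      D ≤ Module.finrank ℂ V)
    (hS : ∀ s ∈ S, s⁻¹ ∈ S) (A : Finset G)
    (hA : ∀ x ∈ A, ∀ y ∈ A, x⁻¹ * y ∉ S) :
    (S.ncard : ℝ) * (A.card : ℝ)^2 / (Fintype.card G : ℝ)
      ≤ Real.sqrt (((Fintype.card G : ℝ) * (S.ncard : ℝ))/D) * (A.card : ℝ) := by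
  classical
  set m : ℝ := (Fintype.card G : ℝ) with hm
  set a : ℝ := (A.card : ℝ) with ha
  set s' : ℝ := (S.ncard : ℝ) with hs'
  set B : ℝ := Real.sqrt ((m * s')/D) with hB
  have hm0 : (0:ℝ) < m := by
    rw [hm]; exact_mod_cast Fintype.card_pos
  set oneA : EuclideanSpace ℂ G := WithLp.toLp 2 (fun x => if x ∈ A then (1 : ℂ) else 0) with honeA
  set cR : ℝ := a / m with hcR
  set f : EuclideanSpace ℂ G := oneA - ((cR : ℝ) : ℂ) • qrOne with hf
  have hsum_oneA : qrSum oneA = (a : ℂ) := by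
    rw [qrSum_apply]
    simp only [honeA, PiLp.toLp_apply, Finset.sum_boole, Finset.filter_univ_mem]
    norm_cast
  have hsum_one : qrSum (qrOne : EuclideanSpace ℂ G) = (m : ℂ) := by
    rw [qrSum_apply]
    simp [qrOne, Finset.card_univ, hm]
  have hfker : f ∈ LinearMap.ker qrSum := by
    rw [LinearMap.mem_ker, hf, map_sub, map_smul, hsum_oneA, hsum_one, smul_eq_mul, hcR]
    have : ((a / m : ℝ) : ℂ) * (m:ℂ) = (a:ℂ) := by
      have hmne : (m:ℂ) ≠ 0 := by exact_mod_cast hm0.ne'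
      push_cast
      field_simp
    rw [this, sub_self]
  have hTone : qrT S qrOne = ((s' : ℝ) : ℂ) • (qrOne : EuclideanSpace ℂ G) := by
    ext x
    have h1 : qrT S qrOne x = ∑ y, qrInd S (x⁻¹ * y) * 1 := rfl
    rw [h1]
    simp only [mul_one]
    rw [qrInd_row_sum]
    have h2 : (((s' : ℝ) : ℂ) • (qrOne : EuclideanSpace ℂ G)) x = ((s' : ℝ) : ℂ) := by
      simp [qrOne]
    rw [h2]
    norm_cast
  have hinner_AA : (inner ℂ oneA (qrT S oneA) : ℂ) = 0 := by
    rw [PiLp.inner_apply]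
    apply Finset.sum_eq_zero
    intro x _
    by_cases hx : x ∈ A
    · have hz : qrT S oneA x = 0 := by
        rw [qrT_apply]
        apply Finset.sum_eq_zero
        intro y _
        by_cases hy : y ∈ A
        · have : x⁻¹ * y ∉ S := hA x hx y hy
          rw [qrInd, if_neg this, zero_mul]
        · have : oneA y = 0 := by rw [honeA]; simp [hy]
          rw [this, mul_zero]
      rw [hz]
      simp
    · have : oneA x = 0 := by rw [honeA]; simp [hx]
      rw [RCLike.inner_apply, this]
      simp
  have hinner_A1 : (inner ℂ oneA (qrOne : EuclideanSpace ℂ G) : ℂ) = (a : ℂ) := by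
    rw [PiLp.inner_apply]
    simp only [RCLike.inner_apply']
    have hconj : ∀ x : G, (starRingEnd ℂ) (oneA x) * qrOne x = oneA x := by
      intro x
      show (starRingEnd ℂ) (if x ∈ A then (1:ℂ) else 0) * 1 = (if x ∈ A then (1:ℂ) else 0)
      split <;> simp
    rw [Finset.sum_congr rfl (fun x _ => hconj x)]
    show ∑ x : G, (if x ∈ A then (1:ℂ) else 0) = (a : ℂ)
    rw [Finset.sum_boole, Finset.filter_univ_mem]
    norm_cast
  have hinner_one : ∀ v : EuclideanSpace ℂ G, (inner ℂ (qrOne : EuclideanSpace ℂ G) v : ℂ) = qrSum v := by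
    intro v
    rw [PiLp.inner_apply, qrSum_apply]
    apply Finset.sum_congr rfl
    intro x _
    rw [RCLike.inner_apply']
    show (starRingEnd ℂ) 1 * v x = v x
    simp
  have hinner_1T : (inner ℂ (qrOne : EuclideanSpace ℂ G) (qrT S oneA) : ℂ) = (s' : ℂ) * (a : ℂ) := by
    rw [hinner_one, qrSum_qrT, hsum_oneA]
    norm_cast
  have hinner_1A : (inner ℂ (qrOne : EuclideanSpace ℂ G) oneA : ℂ) = (a : ℂ) := by
    rw [hinner_one, hsum_oneA]
  have hinner_11 : (inner ℂ (qrOne : EuclideanSpace ℂ G) (qrOne : EuclideanSpace ℂ G) : ℂ) = (m : ℂ) := by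
    rw [hinner_one, hsum_one]
  have hTf : qrT S f = qrT S oneA - ((cR * s' : ℝ) : ℂ) • (qrOne : EuclideanSpace ℂ G) := by
    rw [hf, map_sub, map_smul, hTone, smul_smul]
    congr 2
    push_cast
    ring
  have hexp : (inner ℂ f (qrT S f) : ℂ) = ((cR*(cR*s')*m - cR*s'*a - cR*(s'*a) : ℝ) : ℂ) := by
    rw [hf, hTf, inner_sub_left, inner_sub_right, inner_sub_right,
      inner_smul_left, inner_smul_right, inner_smul_right, inner_smul_left]
    rw [hinner_AA, hinner_A1, hinner_1T, hinner_11]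
    simp only [Complex.conj_ofReal]
    push_cast
    ring
  have hval : cR*(cR*s')*m - cR*s'*a - cR*(s'*a) = -(s' * a^2 / m) := by
    rw [hcR]
    field_simp
    ring
  have hre : (inner ℂ f (qrT S f) : ℂ).re = -(s' * a^2 / m) := by
    rw [hexp, Complex.ofReal_re, hval]
  have hffval : a - cR*a - (cR*a - cR*cR*m) = a - a^2/m := by
    rw [hcR]
    field_simp
    ring
  have hAA2 : (inner ℂ oneA oneA : ℂ) = (a : ℂ) := by
    rw [PiLp.inner_apply]
    simp only [RCLike.inner_apply']
    have hconj2 : ∀ x : G, (starRingEnd ℂ) (oneA x) * oneA x = oneA x := by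
      intro x
      show (starRingEnd ℂ) (if x ∈ A then (1:ℂ) else 0) * (if x ∈ A then (1:ℂ) else 0)
        = (if x ∈ A then (1:ℂ) else 0)
      split <;> simp
    rw [Finset.sum_congr rfl (fun x _ => hconj2 x)]
    show ∑ x : G, (if x ∈ A then (1:ℂ) else 0) = (a : ℂ)
    rw [Finset.sum_boole, Finset.filter_univ_mem]
    norm_cast
  have hff : (inner ℂ f f : ℂ) = ((a - a^2/m : ℝ) : ℂ) := by
    rw [hf, inner_sub_left, inner_sub_right, inner_sub_right,
      inner_smul_left, inner_smul_right, inner_smul_right, inner_smul_left]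
    rw [hAA2, hinner_A1, hinner_1A, hinner_11]
    simp only [Complex.conj_ofReal]
    rw [← hffval]
    push_cast
    ring
  have hnorm : ‖f‖^2 = a - a^2/m := by
    rw [InnerProductSpace.norm_sq_eq_re_inner (𝕜 := ℂ), hff, RCLike.re_to_complex, Complex.ofReal_re]
  have hquad := qr_quad_bound S D hD hquasi hS f hfker
  have hkey : s' * a^2 / m ≤ B * (a - a^2/m) := by
    calc s' * a^2 / m = -((inner ℂ f (qrT S f) : ℂ).re) := by rw [hre]; ring
      _ ≤ |(inner ℂ f (qrT S f) : ℂ).re| := neg_le_abs _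
      _ ≤ Real.sqrt ((m * s')/D) * ‖f‖^2 := hquad
      _ = B * (a - a^2/m) := by rw [← hB, hnorm]
  calc s' * a^2 / m ≤ B * (a - a^2/m) := hkey
    _ ≤ B * a := by
        apply mul_le_mul_of_nonneg_left _ (Real.sqrt_nonneg _)
        have : 0 ≤ a^2/m := div_nonneg (sq_nonneg _) hm0.le
        linarith

end QRAux

/-- If `G` is a finite `D`-quasirandom group and `S` a symmetric subset of `G`
not containing the identity, then `χ(Cay(G,S)) ≥ √(D·|S|/|G|)`. -/
theorem chromatic_lower_bound_quasirandom {G : Type*} [Group G] [Fintype G]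
    (D : ℕ) (hD : 0 < D)
    (hquasi : ∀ (V : Type) [AddCommGroup V] [Module ℂ V] [FiniteDimensional ℂ V]
      (ρ : Representation ℂ G V),
      (∃ g : G, ρ g ≠ LinearMap.id) →
      (∀ W : Submodule ℂ V, (∀ g : G, W.map (ρ g) ≤ W) → W = ⊥ ∨ W = ⊤) →
      D ≤ Module.finrank ℂ V)
    (S : Set G) (hS : ∀ s ∈ S, s⁻¹ ∈ S) (h1 : (1 : G) ∉ S) :
    ∀ n : ℕ, (cayleyGraph S).Colorable n →
      Real.sqrt ((D : ℝ) * S.ncard / Fintype.card G) ≤ n := by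
  classical
  intro n hcol
  obtain ⟨C⟩ := hcol
  have hn0 : 0 < n := by
    rcases Nat.eq_zero_or_pos n with h | h
    · subst h
      exact (C 1).elim0
    · exact h
  -- pigeonhole : a large colour class
  obtain ⟨c₀, -, hmax⟩ := Finset.exists_max_image Finset.univ
    (fun c : Fin n => (Finset.univ.filter (fun x : G => C x = c)).card)
    ⟨⟨0, hn0⟩, Finset.mem_univ _⟩
  set A := Finset.univ.filter (fun x : G => C x = c₀) with hA_def
  have hcard : Fintype.card G ≤ n * A.card := by
    have h1' : Fintype.card G
        = ∑ c : Fin n, (Finset.univ.filter (fun x : G => C x = c)).card := by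
      rw [← Finset.card_univ]
      exact Finset.card_eq_sum_card_fiberwise (fun x _ => Finset.mem_univ (C x))
    calc Fintype.card G
        = ∑ c : Fin n, (Finset.univ.filter (fun x : G => C x = c)).card := h1'
      _ ≤ ∑ _c : Fin n, A.card :=
          Finset.sum_le_sum (fun c _ => hmax c (Finset.mem_univ c))
      _ = n * A.card := by
          rw [Finset.sum_const, Finset.card_univ, Fintype.card_fin, smul_eq_mul]
  -- the colour class is independent
  have hA : ∀ x ∈ A, ∀ y ∈ A, x⁻¹ * y ∉ S := by
    intro x hx y hy hmem
    have hxy : x ≠ y := by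
      rintro rfl
      rw [inv_mul_cancel] at hmem
      exact h1 hmem
    have hadj : (cayleyGraph S).Adj x y := by
      show (SimpleGraph.fromRel (fun x y => x⁻¹ * y ∈ S)).Adj x y
      rw [SimpleGraph.fromRel_adj]
      exact ⟨hxy, Or.inl hmem⟩
    apply C.valid hadj
    rw [(Finset.mem_filter.mp hx).2, (Finset.mem_filter.mp hy).2]
  have hbound := qr_indep_bound S D hD hquasi hS A hA
  set m : ℝ := (Fintype.card G : ℝ) with hm
  set a : ℝ := (A.card : ℝ) with ha
  set s' : ℝ := (S.ncard : ℝ) with hs'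
  set B : ℝ := Real.sqrt ((m * s')/D) with hB
  have hm0 : (0:ℝ) < m := by rw [hm]; exact_mod_cast Fintype.card_pos
  have hD0 : (0:ℝ) < (D:ℝ) := by exact_mod_cast hD
  by_cases hs0 : S.ncard = 0
  · have : (D : ℝ) * (S.ncard : ℝ) / (Fintype.card G : ℝ) = 0 := by
      rw [hs0]; simp
    rw [this, Real.sqrt_zero]
    exact_mod_cast Nat.zero_le n
  · have hs1 : (0:ℝ) < s' := by
      rw [hs']
      exact_mod_cast Nat.pos_of_ne_zero hs0
    have hcardR : m ≤ (n:ℝ) * a := by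
      rw [hm, ha]
      exact_mod_cast hcard
    have ha0 : (0:ℝ) < a := by
      by_contra hcon
      push_neg at hcon
      have : (n:ℝ) * a ≤ 0 := mul_nonpos_of_nonneg_of_nonpos (by positivity) hcon
      linarith
    have hB0 : (0:ℝ) < B := by
      rw [hB]
      exact Real.sqrt_pos.mpr (div_pos (mul_pos hm0 hs1) hD0)
    have h2 : s' * a / m ≤ B := by
      have hx : s' * a^2 / m = (s' * a / m) * a := by ring
      rw [hx] at hbound
      exact le_of_mul_le_mul_right hbound ha0
    have h3 : m / a ≤ (n:ℝ) := (div_le_iff₀ ha0).mpr hcardR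
    have h4 : s' / B ≤ m / a := by
      rw [div_le_div_iff₀ hB0 ha0]
      have := (div_le_iff₀ hm0).mp h2
      calc s' * a ≤ B * m := this
        _ = m * B := by ring
    have h5 : Real.sqrt ((D:ℝ) * s' / m) = s' / B := by
      rw [eq_div_iff hB0.ne']
      rw [hB, ← Real.sqrt_mul (by positivity)]
      have hx : (D:ℝ) * s' / m * (m * s' / D) = s'^2 := by
        field_simp
      rw [hx, Real.sqrt_sq hs1.le]
    calc Real.sqrt ((D:ℝ) * (S.ncard:ℝ) / (Fintype.card G : ℝ))
        = Real.sqrt ((D:ℝ) * s' / m) := by rw [← hs', ← hm]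
      _ = s' / B := h5
      _ ≤ m / a := h4
      _ ≤ (n:ℝ) := h3
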